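/- Let $K_n$ be the complete graph on $n$ vertices, $0 < r < 1$ with $k = \lfloor rn \rfloor \geq 1$, and write $n = pk + q$ with $0 \leq q < k$. The minimum number of edges whose removal from $K_n$ leaves every connected component with at most $k$ vertices equals $\binom{n}{2} - p\binom{k}{2} - \binom{q}{2}$. -/

import Mathlib

open SimpleGraph

/-- A graph is in a *failure state* for threshold `k` if every connected
component has order at most `k`. -/
def failureState {V : Type*} (G : SimpleGraph V) (k : ℕ) : Prop :=
  ∀ v : V, (G.connectedComponentMk v).supp.ncard ≤ k

/-- `S` is a vertex disconnecting set: removing the vertices of `S` from `G`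
leaves every component with at most `k` vertices. -/
def vertexDisconnects {V : Type*} (G : SimpleGraph V) (k : ℕ) (S : Set V) : Prop :=
  failureState (G.induce Sᶜ) k

/-- Component order proportion vertex connectivity: minimum size of a vertex
disconnecting set. -/
noncomputable def COv {V : Type*} (G : SimpleGraph V) (k : ℕ) : ℕ :=
  sInf {c | ∃ S : Set V, S.ncard = c ∧ vertexDisconnects G k S}

/-- Component order proportion edge connectivity: minimum size of an edge
disconnecting set. -/
noncomputable def COe {V : Type*} (G : SimpleGraph V) (k : ℕ) : ℕ :=
  sInf {c | ∃ E' : Set (Sym2 V), E' ⊆ G.edgeSet ∧ E'.ncard = c ∧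
    failureState (G.deleteEdges E') k}

/-- Minimum of `COv` over all graphs with `n` vertices and `m` edges. -/
noncomputable def gminV (n k m : ℕ) : ℕ :=
  sInf {c | ∃ G : SimpleGraph (Fin n), G.edgeSet.ncard = m ∧ COv G k = c}

/-- Minimum of `COe` over all graphs with `n` vertices and `m` edges. -/
noncomputable def gminE (n k m : ℕ) : ℕ :=
  sInf {c | ∃ G : SimpleGraph (Fin n), G.edgeSet.ncard = m ∧ COe G k = c}


lemma mul_pred_self (x : ℕ) : x * (x - 1) = x * x - x := by
  cases x with
  | zero => simp
  | succ m =>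
    rw [Nat.succ_sub_one]
    conv_rhs => rw [Nat.mul_succ, Nat.add_sub_cancel]

lemma le_sq' (x : ℕ) : x ≤ x * x := by
  cases x with
  | zero => simp
  | succ m => exact Nat.le_mul_of_pos_right _ (Nat.succ_pos m)

lemma key1 (a b : ℕ) : a * (a - 1) + b * (b - 1) ≤ (a + b) * (a + b - 1) := by
  rw [mul_pred_self, mul_pred_self, mul_pred_self]
  zify [le_sq' a, le_sq' b, le_sq' (a + b)]
  nlinarith [mul_nonneg (Int.ofNat_nonneg a) (Int.ofNat_nonneg b)]

lemma key2 (a b k : ℕ) (ha : a ≤ k) (hb : b ≤ k) (hab : k ≤ a + b) :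
    a * (a - 1) + b * (b - 1) ≤ k * (k - 1) + (a + b - k) * ((a + b - k) - 1) := by
  rw [mul_pred_self, mul_pred_self, mul_pred_self, mul_pred_self]
  zify [le_sq' a, le_sq' b, le_sq' k, le_sq' (a + b - k), hab]
  have h1 : (a : ℤ) ≤ k := by exact_mod_cast ha
  have h2 : (b : ℤ) ≤ k := by exact_mod_cast hb
  nlinarith [mul_nonneg (sub_nonneg.mpr h1) (sub_nonneg.mpr h2)]

lemma euclid (k d d' b b' : ℕ) (hk : 0 < k) (hb : b < k) (hb' : b' < k)
    (h : k * d + b = k * d' + b') : d = d' ∧ b = b' := by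
  have h1 : (k * d + b) / k = (k * d' + b') / k := by rw [h]
  rw [Nat.mul_add_div hk, Nat.mul_add_div hk, Nat.div_eq_of_lt hb, Nat.div_eq_of_lt hb'] at h1
  simp only [Nat.add_zero] at h1
  subst h1
  exact ⟨rfl, Nat.add_left_cancel h⟩

lemma conv' {α : Type*} [DecidableEq α] (k : ℕ) (hk : 0 < k) (f : α → ℕ) :
    ∀ s : Finset α, (∀ a ∈ s, f a ≤ k) → ∀ d b, b < k → ∑ a ∈ s, f a = k * d + b →
      ∑ a ∈ s, f a * (f a - 1) ≤ d * (k * (k - 1)) + b * (b - 1) := by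
  intro s
  induction s using Finset.induction_on with
  | empty =>
    intro _ d b hb h
    simp only [Finset.sum_empty] at h ⊢
    obtain ⟨h1, h2⟩ := (Nat.add_eq_zero).mp h.symm
    have hd : d = 0 := by
      rcases Nat.mul_eq_zero.mp h1 with h | h
      · omega
      · exact h
    simp [hd, h2]
  | insert a s' ha ih =>
    intro hf d b hb h
    rw [Finset.sum_insert ha] at h ⊢
    have hfa : f a ≤ k := hf a (Finset.mem_insert_self a s')
    have hf' : ∀ x ∈ s', f x ≤ k := fun x hx => hf x (Finset.mem_insert_of_mem hx)
    set S := ∑ x ∈ s', f x with hS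
    have hdm : S = k * (S / k) + S % k := (Nat.div_add_mod S k).symm
    have hmlt : S % k < k := Nat.mod_lt _ hk
    have ihS := ih hf' (S / k) (S % k) hmlt hdm
    by_cases hc : f a + S % k < k
    · have heq : k * d + b = k * (S / k) + (f a + S % k) := by linarith
      obtain ⟨hd, hbe⟩ := euclid k d (S / k) b (f a + S % k) hk hb hc heq
      subst hd; subst hbe
      have := key1 (f a) (S % k)
      linarith
    · push_neg at hc
      set c := f a + S % k - k with hcdef
      have hclt : c < k := by omega
      have hx : k * (S / k + 1) = k * (S / k) + k := by ring
      have heq : k * d + b = k * (S / k + 1) + c := by rw [hx]; omega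
      obtain ⟨hd, hbe⟩ := euclid k d (S / k + 1) b c hk hb hclt heq
      subst hd; subst hbe
      have hkey := key2 (f a) (S % k) k hfa (le_of_lt hmlt) hc
      have hy : (S / k + 1) * (k * (k - 1)) = (S / k) * (k * (k - 1)) + k * (k - 1) := by ring
      rw [hy, ← hcdef] at *
      linarith

lemma two_mul_choose_two' (x : ℕ) : 2 * x.choose 2 = x * (x - 1) := by
  cases x with
  | zero => simp
  | succ m =>
    have he : Even ((m + 1) * m) := by rw [Nat.mul_comm]; exact Nat.even_mul_succ_self m
    rw [Nat.choose_two_right, Nat.succ_sub_one, Nat.mul_div_cancel' he.two_dvd]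

lemma edge_upper (n p q k : ℕ) (hk : 0 < k) (hn : n = p * k + q) (hq : q < k)
    (H : SimpleGraph (Fin n)) [DecidableRel H.Adj]
    (hfail : ∀ v : Fin n, (H.connectedComponentMk v).supp.ncard ≤ k) :
    H.edgeFinset.card ≤ p * k.choose 2 + q.choose 2 := by
  classical
  set t : Finset H.ConnectedComponent := Finset.univ.image H.connectedComponentMk with ht
  have hmaps : ∀ v ∈ (Finset.univ : Finset (Fin n)), H.connectedComponentMk v ∈ t :=
    fun v hv => Finset.mem_image_of_mem _ hv
  set sz : H.ConnectedComponent → ℕ :=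
    fun cc => (Finset.univ.filter fun v : Fin n => H.connectedComponentMk v = cc).card with hsz
  have hsizes : ∀ cc ∈ t, sz cc ≤ k := by
    intro cc hcc
    obtain ⟨v, _, rfl⟩ := Finset.mem_image.mp hcc
    have hcoe : ((Finset.univ.filter fun w : Fin n =>
        H.connectedComponentMk w = H.connectedComponentMk v) : Set (Fin n))
        = (H.connectedComponentMk v).supp := by
      ext w; simp [SimpleGraph.ConnectedComponent.mem_supp_iff]
    calc sz (H.connectedComponentMk v)
        = (H.connectedComponentMk v).supp.ncard := by
          show (Finset.univ.filter fun w : Fin n =>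
            H.connectedComponentMk w = H.connectedComponentMk v).card = _
          rw [← hcoe, Set.ncard_coe_finset]
      _ ≤ k := hfail v
  have hsumn : ∑ cc ∈ t, sz cc = n := by
    have := Finset.card_eq_sum_card_fiberwise hmaps
    rw [Finset.card_univ, Fintype.card_fin] at this
    exact this.symm
  have hdegle : ∀ cc ∈ t, ∀ v ∈ Finset.univ.filter (fun v : Fin n => H.connectedComponentMk v = cc),
      H.degree v ≤ sz cc - 1 := by
    intro cc _ v hv
    rw [Finset.mem_filter] at hv
    have hnb : H.neighborFinset v ⊆
        (Finset.univ.filter fun w : Fin n => H.connectedComponentMk w = cc).erase v := by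
      intro w hw
      rw [SimpleGraph.mem_neighborFinset] at hw
      rw [Finset.mem_erase, Finset.mem_filter]
      refine ⟨hw.ne', Finset.mem_univ _, ?_⟩
      rw [← hv.2]
      exact SimpleGraph.ConnectedComponent.eq.mpr hw.symm.reachable
    calc H.degree v = (H.neighborFinset v).card := rfl
      _ ≤ ((Finset.univ.filter fun w : Fin n =>
            H.connectedComponentMk w = cc).erase v).card := Finset.card_le_card hnb
      _ = sz cc - 1 := by
          have hvmem : v ∈ Finset.univ.filter (fun w : Fin n => H.connectedComponentMk w = cc) := by
            rw [Finset.mem_filter]; exact ⟨Finset.mem_univ _, hv.2⟩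
          rw [Finset.card_erase_of_mem hvmem]
  have hEH2 : 2 * H.edgeFinset.card ≤ p * (k * (k - 1)) + q * (q - 1) := by
    rw [← SimpleGraph.sum_degrees_eq_twice_card_edges,
      ← Finset.sum_fiberwise_of_maps_to hmaps (fun v => H.degree v)]
    calc ∑ cc ∈ t, ∑ v ∈ Finset.univ.filter (fun v : Fin n => H.connectedComponentMk v = cc),
          H.degree v
        ≤ ∑ cc ∈ t, sz cc * (sz cc - 1) := by
          refine Finset.sum_le_sum fun cc hcc => ?_
          have := Finset.sum_le_card_nsmul _ _ _ (hdegle cc hcc)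
          simpa [smul_eq_mul, hsz] using this
      _ ≤ p * (k * (k - 1)) + q * (q - 1) :=
          conv' k hk sz t hsizes p q hq (by rw [hsumn, hn, Nat.mul_comm])
  have e1 : p * (k * (k - 1)) = 2 * (p * k.choose 2) := by rw [← two_mul_choose_two']; ring
  have e2 : q * (q - 1) = 2 * q.choose 2 := (two_mul_choose_two' q).symm
  rw [e1, e2] at hEH2
  linarith


lemma card_filter_fin (n : ℕ) (P : ℕ → Prop) [DecidablePred P] :
    (Finset.univ.filter fun v : Fin n => P v.val).card = ((Finset.range n).filter P).card := by
  rw [Finset.card_filter, Finset.card_filter,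
    Fin.sum_univ_eq_sum_range (fun m => if P m then 1 else 0)]

lemma fib_card (n k i : ℕ) (hk : 0 < k) :
    (Finset.univ.filter fun w : Fin n => (w : ℕ) / k = i).card = min n ((i + 1) * k) - i * k := by
  rw [card_filter_fin n (fun m => m / k = i)]
  have h : (Finset.range n).filter (fun m => m / k = i) = Finset.Ico (i * k) (min n ((i + 1) * k)) := by
    ext m
    simp only [Finset.mem_filter, Finset.mem_range, Finset.mem_Ico, lt_min_iff]
    constructor
    · rintro ⟨hmn, hdiv⟩
      subst hdiv
      refine ⟨Nat.div_mul_le_self m k, hmn, ?_⟩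
      exact (Nat.div_lt_iff_lt_mul hk).mp (Nat.lt_succ_self _)
    · rintro ⟨hik, hmn, hlt⟩
      refine ⟨hmn, ?_⟩
      have h1 : i ≤ m / k := (Nat.le_div_iff_mul_le hk).mpr hik
      have h2 : m / k < i + 1 := (Nat.div_lt_iff_lt_mul hk).mpr hlt
      omega
  rw [h, Nat.card_Ico]

lemma card_filter_lt_fin (n t : ℕ) (h : t ≤ n) :
    (Finset.univ.filter fun v : Fin n => (v : ℕ) < t).card = t := by
  rw [card_filter_fin n (fun m => m < t)]
  have : (Finset.range n).filter (fun m => m < t) = Finset.range t := by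
    ext m; simp only [Finset.mem_filter, Finset.mem_range]; omega
  rw [this, Finset.card_range]

/-- The disjoint union of cliques on blocks of `k` consecutive vertices. -/
def blockGraph (n k : ℕ) : SimpleGraph (Fin n) where
  Adj v w := v ≠ w ∧ (v : ℕ) / k = (w : ℕ) / k
  symm := ⟨fun (v w : Fin n) (h : v ≠ w ∧ (v : ℕ) / k = (w : ℕ) / k) => ⟨h.1.symm, h.2.symm⟩⟩
  loopless := ⟨fun (v : Fin n) (h : v ≠ v ∧ (v : ℕ) / k = (v : ℕ) / k) => h.1 rfl⟩

instance (n k : ℕ) : DecidableRel (blockGraph n k).Adj :=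
  fun v w => inferInstanceAs (Decidable (v ≠ w ∧ (v : ℕ) / k = (w : ℕ) / k))

lemma blockGraph_card_filter (n p q k : ℕ) (hk : 0 < k) (hn : n = p * k + q) (hq : q < k)
    (v : Fin n) :
    (Finset.univ.filter fun w : Fin n => (w : ℕ) / k = (v : ℕ) / k).card
      = if (v : ℕ) < p * k then k else q := by
  have hpk : p * k ≤ n := hn ▸ Nat.le_add_right _ _
  rw [fib_card n k _ hk]
  by_cases hv : (v : ℕ) < p * k
  · have hi : (v : ℕ) / k < p := (Nat.div_lt_iff_lt_mul hk).mpr hv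
    have h1 : ((v : ℕ) / k + 1) * k ≤ n := le_trans (Nat.mul_le_mul_right k hi) hpk
    rw [if_pos hv, min_eq_right h1, add_mul, one_mul, Nat.add_sub_cancel_left]
  · have hvn : (v : ℕ) < n := v.isLt
    have hnlt : n < (p + 1) * k := by
      rw [add_mul, one_mul, hn]; exact Nat.add_lt_add_left hq _
    have hi : (v : ℕ) / k = p := by
      have h1 : p ≤ (v : ℕ) / k := (Nat.le_div_iff_mul_le hk).mpr (le_of_not_gt hv)
      have h2 : (v : ℕ) / k < p + 1 := (Nat.div_lt_iff_lt_mul hk).mpr (lt_trans hvn hnlt)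
      omega
    rw [if_neg hv, hi, min_eq_left (le_of_lt hnlt), hn, Nat.add_sub_cancel_left]

lemma blockGraph_degree (n p q k : ℕ) (hk : 0 < k) (hn : n = p * k + q) (hq : q < k)
    (v : Fin n) :
    (blockGraph n k).degree v = (if (v : ℕ) < p * k then k else q) - 1 := by
  rw [← blockGraph_card_filter n p q k hk hn hq v]
  have hne : (blockGraph n k).neighborFinset v
      = (Finset.univ.filter fun w : Fin n => (w : ℕ) / k = (v : ℕ) / k).erase v := by
    ext w
    rw [SimpleGraph.mem_neighborFinset]
    simp only [SimpleGraph.mem_neighborFinset, Finset.mem_erase, Finset.mem_filter,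
      Finset.mem_univ, true_and, blockGraph]
    constructor
    · rintro ⟨h1, h2⟩; exact ⟨Ne.symm h1, h2.symm⟩
    · rintro ⟨h1, h2⟩; exact ⟨Ne.symm h1, h2.symm⟩
  rw [SimpleGraph.degree, hne, Finset.card_erase_of_mem (by simp)]

lemma blockGraph_card_edges (n p q k : ℕ) (hk : 0 < k) (hn : n = p * k + q) (hq : q < k) :
    (blockGraph n k).edgeFinset.card = p * k.choose 2 + q.choose 2 := by
  have hpk : p * k ≤ n := hn ▸ Nat.le_add_right _ _
  have h2 := SimpleGraph.sum_degrees_eq_twice_card_edges (blockGraph n k)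
  have hsum : ∑ v : Fin n, (blockGraph n k).degree v = p * (k * (k - 1)) + q * (q - 1) := by
    calc ∑ v : Fin n, (blockGraph n k).degree v
        = ∑ v : Fin n, (if (v : ℕ) < p * k then k - 1 else q - 1) := by
          refine Finset.sum_congr rfl fun v _ => ?_
          rw [blockGraph_degree n p q k hk hn hq v, apply_ite (· - 1)]
      _ = (Finset.univ.filter fun v : Fin n => (v : ℕ) < p * k).card * (k - 1)
          + (Finset.univ.filter fun v : Fin n => ¬ (v : ℕ) < p * k).card * (q - 1) := by
          rw [Finset.sum_ite, Finset.sum_const, Finset.sum_const, smul_eq_mul, smul_eq_mul]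
      _ = p * (k * (k - 1)) + q * (q - 1) := by
          have h1 : (Finset.univ.filter fun v : Fin n => (v : ℕ) < p * k).card = p * k :=
            card_filter_lt_fin n (p * k) hpk
          have h3 := Finset.card_filter_add_card_filter_not
            (s := (Finset.univ : Finset (Fin n))) (p := fun v : Fin n => (v : ℕ) < p * k)
          rw [Finset.card_univ, Fintype.card_fin] at h3
          have h4 : (Finset.univ.filter fun v : Fin n => ¬ (v : ℕ) < p * k).card = q := by
            omega
          rw [h1, h4, mul_assoc]
  rw [hsum] at h2
  have e1 : p * (k * (k - 1)) = 2 * (p * k.choose 2) := by rw [← two_mul_choose_two']; ring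
  have e2 : q * (q - 1) = 2 * q.choose 2 := (two_mul_choose_two' q).symm
  rw [e1, e2] at h2
  linarith

lemma blockGraph_failure (n p q k : ℕ) (hk : 0 < k) (hn : n = p * k + q) (hq : q < k) :
    ∀ v : Fin n, ((blockGraph n k).connectedComponentMk v).supp.ncard ≤ k := by
  intro v
  have hr : ∀ u w : Fin n, (blockGraph n k).Reachable u w → (u : ℕ) / k = (w : ℕ) / k := by
    intro u w h
    obtain ⟨pw⟩ := h
    induction pw with
    | nil => rfl
    | cons h _ ih => exact (h : _ ≠ _ ∧ _ = _).2.trans ih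
  have hsub : ((blockGraph n k).connectedComponentMk v).supp
      ⊆ {w : Fin n | (w : ℕ) / k = (v : ℕ) / k} := by
    intro w hw
    rw [SimpleGraph.ConnectedComponent.mem_supp_iff] at hw
    exact hr w v (SimpleGraph.ConnectedComponent.eq.mp hw)
  refine le_trans (Set.ncard_le_ncard hsub (Set.toFinite _)) ?_
  have hcoe : {w : Fin n | (w : ℕ) / k = (v : ℕ) / k}
      = ↑(Finset.univ.filter fun w : Fin n => (w : ℕ) / k = (v : ℕ) / k) := by
    ext w; simp
  rw [hcoe, Set.ncard_coe_finset, blockGraph_card_filter n p q k hk hn hq v]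
  split <;> omega

theorem completeCOe (n p q : ℕ) (r : ℝ) (hr0 : 0 < r) (hr1 : r < 1)
    (k : ℕ) (hk : k = ⌊r * n⌋₊) (hk1 : 1 ≤ k) (hn : n = p * k + q) (hq : q < k) :
    COe (⊤ : SimpleGraph (Fin n)) k =
      n.choose 2 - p * k.choose 2 - q.choose 2 := by
  classical
  have hk0 : 0 < k := hk1
  have h1 : (⊤ : SimpleGraph (Fin n)).edgeSet.ncard = n.choose 2 := by
    rw [← SimpleGraph.coe_edgeFinset, Set.ncard_coe_finset,
      SimpleGraph.card_edgeFinset_top_eq_card_choose_two, Fintype.card_fin]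
  have hsubE : (blockGraph n k).edgeSet ⊆ (⊤ : SimpleGraph (Fin n)).edgeSet :=
    SimpleGraph.edgeSet_mono le_top
  have hdel : (⊤ : SimpleGraph (Fin n)).deleteEdges
      ((⊤ : SimpleGraph (Fin n)).edgeSet \ (blockGraph n k).edgeSet) = blockGraph n k := by
    rw [← SimpleGraph.edgeSet_inj, SimpleGraph.edgeSet_deleteEdges]
    exact Set.diff_diff_cancel_left hsubE
  have hcard0 : ((⊤ : SimpleGraph (Fin n)).edgeSet \ (blockGraph n k).edgeSet).ncard
      = n.choose 2 - p * k.choose 2 - q.choose 2 := by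
    rw [Set.ncard_diff hsubE, h1, ← SimpleGraph.coe_edgeFinset, Set.ncard_coe_finset,
      blockGraph_card_edges n p q k hk0 hn hq]
    exact (Nat.sub_sub _ _ _).symm
  have hmem : n.choose 2 - p * k.choose 2 - q.choose 2 ∈
      {c | ∃ E' : Set (Sym2 (Fin n)), E' ⊆ (⊤ : SimpleGraph (Fin n)).edgeSet ∧ E'.ncard = c ∧
        failureState ((⊤ : SimpleGraph (Fin n)).deleteEdges E') k} :=
    ⟨_, Set.diff_subset, hcard0, by rw [hdel]; exact blockGraph_failure n p q k hk0 hn hq⟩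
  unfold COe
  refine le_antisymm (Nat.sInf_le hmem) (le_csInf ⟨_, hmem⟩ ?_)
  rintro c ⟨E', hsub', hcard', hfail'⟩
  have hHE : ((⊤ : SimpleGraph (Fin n)).deleteEdges E').edgeSet
      = (⊤ : SimpleGraph (Fin n)).edgeSet \ E' := SimpleGraph.edgeSet_deleteEdges E'
  have hle : ((⊤ : SimpleGraph (Fin n)).deleteEdges E').edgeSet.ncard
      ≤ p * k.choose 2 + q.choose 2 := by
    rw [← SimpleGraph.coe_edgeFinset, Set.ncard_coe_finset]
    exact edge_upper n p q k hk0 hn hq _ hfail'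
  have heq : ((⊤ : SimpleGraph (Fin n)).deleteEdges E').edgeSet.ncard
      = n.choose 2 - c := by
    rw [hHE, Set.ncard_diff hsub', h1, hcard']
  have hc_le : c ≤ n.choose 2 := by
    rw [← hcard', ← h1]; exact Set.ncard_le_ncard hsub' (Set.toFinite _)
  set A := p * k.choose 2 with hA
  clear hA
  omega
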